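/- Let f: ℝ → ℝ be an increasing Lipschitz continuous function. Then for any measurable set B ⊆ ℝ with Lebesgue measure zero, the derivative f' equals zero almost everywhere on the preimage f⁻¹(B). -/

import Mathlib

open MeasureTheory Set Filter Topology

private lemma mono_deriv_nonneg (f : ℝ → ℝ) (hmono : Monotone f) (x : ℝ) :
    0 ≤ deriv f x := by
  by_cases hd : DifferentiableAt ℝ f x
  · have h := hasDerivAt_iff_tendsto_slope.1 hd.hasDerivAt
    have h' : Tendsto (slope f x) (𝓝[>] x) (𝓝 (deriv f x)) :=
      h.mono_left (nhdsWithin_mono x fun y hy => ne_of_gt hy)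
    refine ge_of_tendsto h' ?_
    filter_upwards [self_mem_nhdsWithin] with y hy
    have : (0:ℝ) < y - x := sub_pos.2 hy
    have : 0 ≤ f y - f x := sub_nonneg.2 (hmono (le_of_lt hy))
    rw [slope_def_field]
    exact div_nonneg ‹0 ≤ f y - f x› (le_of_lt ‹(0:ℝ) < y - x›)
  · simp [deriv_zero_of_not_differentiableAt hd]

private lemma mono_deriv_zero_of_const (f : ℝ → ℝ) (hmono : Monotone f)
    {x y : ℝ} (hxy : x < y) (hfxy : f x = f y) : deriv f x = 0 := by
  by_cases hd : DifferentiableAt ℝ f x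
  · have h := hasDerivAt_iff_tendsto_slope.1 hd.hasDerivAt
    have h' : Tendsto (slope f x) (𝓝[>] x) (𝓝 (deriv f x)) :=
      h.mono_left (nhdsWithin_mono x fun z hz => ne_of_gt hz)
    have h0 : Tendsto (slope f x) (𝓝[>] x) (𝓝 0) := by
      refine tendsto_const_nhds.congr' ?_
      filter_upwards [Ioo_mem_nhdsGT_of_mem (Set.left_mem_Ico.2 hxy)] with z hz
      have h1 : f x ≤ f z := hmono hz.1.le
      have h2 : f z ≤ f x := hfxy ▸ hmono hz.2.le
      rw [slope_def_field, le_antisymm h2 h1, sub_self, zero_div]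
    exact tendsto_nhds_unique h' h0
  · simp [deriv_zero_of_not_differentiableAt hd]

/-- If `f : ℝ → ℝ` is increasing and Lipschitz, then for any measurable set `B`
of Lebesgue measure zero, `deriv f = 0` almost everywhere on `f ⁻¹' B`. -/
theorem deriv_zero_ae_on_preimage_null (f : ℝ → ℝ) (K : NNReal)
    (hmono : Monotone f) (hlip : LipschitzWith K f)
    (B : Set ℝ) (hB : MeasurableSet B) (hB0 : volume B = 0) :
    ∀ᵐ ξ, ξ ∈ f ⁻¹' B → deriv f ξ = 0 := by
  set s : Set ℝ := (f ⁻¹' B) ∩ (deriv f ⁻¹' Set.Ioi 0) with hs_def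
  have hs : MeasurableSet s :=
    (hB.preimage hlip.continuous.measurable).inter
      ((measurable_deriv f) measurableSet_Ioi)
  have hdiff : ∀ x ∈ s, DifferentiableAt ℝ f x := by
    intro x hx
    by_contra hd
    have := deriv_zero_of_not_differentiableAt hd
    have : (0:ℝ) < 0 := this ▸ hx.2
    exact lt_irrefl _ this
  have hf' : ∀ x ∈ s, HasFDerivWithinAt f
      ((1 : ℝ →L[ℝ] ℝ).smulRight (deriv f x)) s x := fun x hx =>
    ((hdiff x hx).hasDerivAt.hasFDerivAt).hasFDerivWithinAt
  have hinj : Set.InjOn f s := by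
    intro a ha b hb hab
    by_contra hne
    rcases lt_or_gt_of_ne hne with h | h
    · exact absurd (mono_deriv_zero_of_const f hmono h hab)
        (ne_of_gt (show (0:ℝ) < deriv f a from ha.2))
    · exact absurd (mono_deriv_zero_of_const f hmono h hab.symm)
        (ne_of_gt (show (0:ℝ) < deriv f b from hb.2))
  have himg : volume (f '' s) = 0 :=
    measure_mono_null (fun y ⟨x, hx, hxy⟩ => hxy ▸ hx.1) hB0
  have hle := MeasureTheory.lintegral_abs_det_fderiv_le_addHaar_image volume hs hf' hinj
  simp only [ContinuousLinearMap.smulRight_one_eq_toSpanSingleton, ContinuousLinearMap.det_toSpanSingleton] at hle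
  have hmeas : Measurable fun x => ENNReal.ofReal |deriv f x| :=
    ENNReal.measurable_ofReal.comp (measurable_deriv f).abs
  have heq0 : (∫⁻ x in s, ENNReal.ofReal |deriv f x|) = 0 :=
    le_antisymm (himg ▸ hle) zero_le
  have hae := (lintegral_eq_zero_iff hmeas).1 heq0
  have hs0 : volume s = 0 := by
    have hsub : s ⊆ {x | ¬ (ENNReal.ofReal |deriv f x| = 0)} := by
      intro x hx
      simp only [Set.mem_setOf_eq, ENNReal.ofReal_eq_zero, not_le]
      exact abs_pos.2 (ne_of_gt hx.2)
    refine le_antisymm ?_ zero_le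
    calc volume s = volume.restrict s s := (Measure.restrict_apply_self _ _).symm
      _ ≤ volume.restrict s {x | ¬ (ENNReal.ofReal |deriv f x| = 0)} :=
          measure_mono hsub
      _ = 0 := hae
  rw [ae_iff]
  refine measure_mono_null ?_ hs0
  intro x hx
  simp only [Set.mem_setOf_eq] at hx
  push_neg at hx
  exact ⟨hx.1, lt_of_le_of_ne (mono_deriv_nonneg f hmono x) (Ne.symm hx.2)⟩
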